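/- If G is a finite group with exactly 2 maximal involutions, then the rainbow connection number of the power graph Γ_G equals 3. -/

import Mathlib

/-- The power graph of a group `G`: distinct elements `x` and `y` are adjacent
iff one is a power of the other. -/
def powerGraph (G : Type*) [Group G] : SimpleGraph G where
  Adj x y := x ≠ y ∧ (x ∈ Subgroup.zpowers y ∨ y ∈ Subgroup.zpowers x)
  symm := ⟨fun x y h => ⟨h.1.symm, h.2.symm⟩⟩
  loopless := ⟨fun x h => h.1 rfl⟩

/-- `ζ` is a rainbow `k`-coloring of `Γ`: every pair of vertices is joined by a
path whose edges receive pairwise distinct colors. -/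
def IsRainbowColoring {V : Type*} (Γ : SimpleGraph V) {k : ℕ} (ζ : Sym2 V → Fin k) : Prop :=
  ∀ u v : V, ∃ p : Γ.Walk u v, p.IsPath ∧ (p.edges.map ζ).Nodup

/-- The rainbow connection number of `Γ`: the least `k` admitting a rainbow
`k`-coloring. -/
noncomputable def rainbowConnection {V : Type*} (Γ : SimpleGraph V) : ℕ :=
  sInf {k : ℕ | ∃ ζ : Sym2 V → Fin k, IsRainbowColoring Γ ζ}

/-- An element `x` is a maximal involution if it has order 2 and the only
cyclic subgroup containing `x` is `⟨x⟩`. -/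
def IsMaximalInvolution {G : Type*} [Group G] (x : G) : Prop :=
  orderOf x = 2 ∧ ∀ g : G, x ∈ Subgroup.zpowers g → Subgroup.zpowers g = Subgroup.zpowers x


open SimpleGraph Subgroup

section Aux
variable {G : Type*} [Group G]

lemma aux_mem_zpowers_two {x y : G} (hx : orderOf x = 2) (hy : y ∈ Subgroup.zpowers x) :
    y = 1 ∨ y = x := by
  obtain ⟨k, rfl⟩ := Subgroup.mem_zpowers_iff.mp hy
  rw [← zpow_mod_orderOf, hx]
  have h2 : ((2 : ℕ) : ℤ) = 2 := by norm_num
  rw [h2]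
  rcases Int.emod_two_eq_zero_or_one k with hk | hk <;> rw [hk] <;> simp

lemma aux_inv_of_two {x : G} (hx : orderOf x = 2) : x⁻¹ = x := by
  have h2 : x ^ 2 = 1 := by rw [← hx]; exact pow_orderOf_eq_one x
  have : x * x = 1 := by rw [← sq]; exact h2
  exact inv_eq_of_mul_eq_one_right this

lemma aux_max_ne_one {x : G} (hx : IsMaximalInvolution x) : x ≠ 1 := by
  intro hc
  have h1 := hx.1
  rw [hc, orderOf_one] at h1
  exact absurd h1 (by norm_num)

lemma aux_adj_max {x w : G} (hx : IsMaximalInvolution x)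
    (hadj : (powerGraph G).Adj x w) : w = 1 := by
  obtain ⟨hne, hmem | hmem⟩ := hadj
  · have := hx.2 w hmem
    have hw : w ∈ Subgroup.zpowers x := this ▸ Subgroup.mem_zpowers w
    rcases aux_mem_zpowers_two hx.1 hw with h | h
    · exact h
    · exact absurd h.symm hne
  · rcases aux_mem_zpowers_two hx.1 hmem with h | h
    · exact h
    · exact absurd h.symm hne

lemma aux_adj_one {v : G} (hv : v ≠ 1) : (powerGraph G).Adj v 1 :=
  ⟨hv, Or.inr (Subgroup.one_mem _)⟩

lemma aux_adj_one' {v : G} (hv : v ≠ 1) : (powerGraph G).Adj 1 v :=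
  (aux_adj_one hv).symm

/-- Lower bound: any rainbow coloring needs at least 3 colors. -/
lemma aux_lower {x1 x2 : G} (h1 : IsMaximalInvolution x1) (h2 : IsMaximalInvolution x2)
    (hne : x1 ≠ x2) {k : ℕ} (ζ : Sym2 G → Fin k)
    (hζ : IsRainbowColoring (powerGraph G) ζ) : 3 ≤ k := by
  -- key claim: for any maximal involution x and target t ∉ {x, 1}, if k ≤ 2 then
  -- ζ s(x,1) ≠ ζ s(1,t)
  have key : k ≤ 2 → ∀ x t : G, IsMaximalInvolution x → t ≠ x → t ≠ 1 →
      ζ s(x, 1) ≠ ζ s(1, t) := by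
    intro hk x t hx ht ht1
    obtain ⟨p, hp, hnd⟩ := hζ x t
    have hlen : p.length ≤ k := by
      have := hnd.length_le_card
      simpa [SimpleGraph.Walk.length_edges] using this
    cases p with
    | nil => exact absurd rfl ht.symm
    | cons hadj q =>
      rename_i w
      have hw : w = 1 := aux_adj_max hx hadj
      subst hw
      cases q with
      | nil => exact absurd rfl ht1.symm
      | cons hadj' q' =>
        rename_i w'
        cases q' with
        | nil =>
          simp only [SimpleGraph.Walk.edges_cons, SimpleGraph.Walk.edges_nil,
            List.map_cons, List.map_nil, List.nodup_cons, List.mem_cons,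
            List.mem_singleton, List.not_mem_nil] at hnd
          intro hc
          exact hnd.1 (Or.inl hc)
        | cons h'' q'' =>
          exfalso
          simp only [SimpleGraph.Walk.length_cons] at hlen
          omega
  by_contra hcon
  push_neg at hcon
  have hk : k ≤ 2 := by omega
  -- k = 0 : impossible since Sym2 G is nonempty
  rcases Nat.lt_or_ge k 1 with hk0 | hk1
  · have : k = 0 := by omega
    subst this
    exact (ζ s((1 : G), 1)).elim0
  -- now 1 ≤ k ≤ 2; derive three distinct colors in Fin k
  have h1' := h1; have h2' := h2
  set u : G := x1 * x2 with hu
  have hx1inv := aux_inv_of_two h1.1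
  have hx2inv := aux_inv_of_two h2.1
  have hu1 : u ≠ 1 := by
    intro hc
    apply hne
    have : x1 = x2⁻¹ := eq_inv_of_mul_eq_one_left hc
    rwa [hx2inv] at this
  have hux1 : u ≠ x1 := by
    intro hc
    apply aux_max_ne_one h2
    exact mul_left_cancel (a := x1) (by rw [mul_one]; exact hc)
  have hux2 : u ≠ x2 := by
    intro hc
    apply aux_max_ne_one h1
    exact mul_right_cancel (b := x2) (by rw [one_mul]; exact hc)
  have hab : ζ s(x1, 1) ≠ ζ s(1, x2) := key hk x1 x2 h1 hne.symm (aux_max_ne_one h2)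
  have hac : ζ s(x1, 1) ≠ ζ s(1, u) := key hk x1 u h1 hux1 hu1
  have hbc : ζ s(x2, 1) ≠ ζ s(1, u) := key hk x2 u h2 hux2 hu1
  have hswap : s((1:G), x2) = s(x2, 1) := Sym2.eq_swap
  rw [hswap] at hab
  have a := ζ s(x1, 1); have b := ζ s(x2, 1); have c := ζ s(1, u)
  have ha2 : (ζ s(x1, 1)).val < k := (ζ s(x1, 1)).isLt
  have hb2 : (ζ s(x2, 1)).val < k := (ζ s(x2, 1)).isLt
  have hc2 : (ζ s(1, u)).val < k := (ζ s(1, u)).isLt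
  have hab' : (ζ s(x1, 1)).val ≠ (ζ s(x2, 1)).val := fun hv => hab (Fin.ext hv)
  have hac' : (ζ s(x1, 1)).val ≠ (ζ s(1, u)).val := fun hv => hac (Fin.ext hv)
  have hbc' : (ζ s(x2, 1)).val ≠ (ζ s(1, u)).val := fun hv => hbc (Fin.ext hv)
  omega

end Aux

section Upper
variable {G : Type*} [Group G] [Fintype G]

open Classical in
/-- Upper bound: an explicit rainbow 3-coloring. -/
lemma aux_upper {x1 x2 : G} (h1 : IsMaximalInvolution x1) (h2 : IsMaximalInvolution x2)
    (hne : x1 ≠ x2) (hall : ∀ y : G, IsMaximalInvolution y → y = x1 ∨ y = x2) :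
    ∃ ζ : Sym2 G → Fin 3, IsRainbowColoring (powerGraph G) ζ := by
  classical
  -- an injection into ℕ to break symmetry between v and v⁻¹
  set r : G → ℕ := fun v => (Fintype.equivFin G v : ℕ) with hr
  have hrinj : Function.Injective r := fun a b hab => by
    have := Fin.ext hab
    exact (Fintype.equivFin G).injective this
  -- vertex colors
  set g : G → Fin 3 := fun v =>
    if v = x1 then 0 else if v = x2 then 1 else if r v < r v⁻¹ then 0 else 1 with hg
  have hg01 : ∀ v, g v = 0 ∨ g v = 1 := by
    intro v; simp only [hg]; split_ifs <;> simp
  have hgne2 : ∀ v, g v ≠ 2 := by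
    intro v; rcases hg01 v with h | h <;> rw [h] <;> decide
  have hgx1 : g x1 = 0 := by simp [hg]
  have hgx2 : g x2 = 1 := by simp [hg, hne.symm]
  have hx1inv : x1⁻¹ = x1 := aux_inv_of_two h1.1
  have hx2inv : x2⁻¹ = x2 := aux_inv_of_two h2.1
  have hginv : ∀ v : G, v ≠ v⁻¹ → v ≠ x1 → v ≠ x2 → g v⁻¹ ≠ g v := by
    intro v hvv hv1 hv2
    have hvi1 : v⁻¹ ≠ x1 := by
      intro hc; apply hv1; rw [← inv_inv v, hc, hx1inv]
    have hvi2 : v⁻¹ ≠ x2 := by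
      intro hc; apply hv2; rw [← inv_inv v, hc, hx2inv]
    have hrne : r v ≠ r v⁻¹ := fun hc => hvv (hrinj hc)
    simp only [hg, if_neg hv1, if_neg hv2, if_neg hvi1, if_neg hvi2, inv_inv]
    rcases Nat.lt_or_ge (r v) (r v⁻¹) with hlt | hge
    · rw [if_pos hlt, if_neg (by omega)]; decide
    · rw [if_pos (by omega), if_neg (by omega)]; decide
  -- edge coloring
  have hfsymm : ∀ u v : G,
      (if u = 1 then g v else if v = 1 then g u else 2) =
      (if v = 1 then g u else if u = 1 then g v else 2) := by
    intro u v
    by_cases hu : u = 1 <;> by_cases hv : v = 1 <;> simp [hu, hv]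
  set ζ : Sym2 G → Fin 3 :=
    Sym2.lift ⟨fun u v => if u = 1 then g v else if v = 1 then g u else 2,
      fun u v => hfsymm u v⟩ with hζ
  have hζ1v : ∀ v : G, ζ s(1, v) = g v := by intro v; simp [hζ]
  have hζv1 : ∀ v : G, v ≠ 1 → ζ s(v, 1) = g v := by
    intro v hv; simp [hζ, hv]
  have hζ2 : ∀ u v : G, u ≠ 1 → v ≠ 1 → ζ s(u, v) = 2 := by
    intro u v hu hv; simp [hζ, hu, hv]
  -- every nonspecial vertex has a neighbor of the opposite color
  have hnbr : ∀ v : G, v ≠ 1 → v ≠ x1 → v ≠ x2 →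
      ∃ w, (powerGraph G).Adj v w ∧ w ≠ 1 ∧ g w ≠ g v := by
    intro v hv1 hvx1 hvx2
    by_cases hvv : v = v⁻¹
    · -- v is a non-maximal involution
      have hv2 : orderOf v = 2 := by
        have hsq : v ^ 2 = 1 := by
          rw [sq]; nth_rewrite 1 [hvv]; exact inv_mul_cancel v
        have hdvd := orderOf_dvd_of_pow_eq_one hsq
        rcases (Nat.dvd_prime Nat.prime_two).mp hdvd with hh | hh
        · exact absurd (orderOf_eq_one_iff.mp hh) hv1
        · exact hh
      have hnotmax : ¬ IsMaximalInvolution v := by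
        intro hmax; rcases hall v hmax with hc | hc
        · exact hvx1 hc
        · exact hvx2 hc
      have : ∃ y : G, v ∈ Subgroup.zpowers y ∧ Subgroup.zpowers y ≠ Subgroup.zpowers v := by
        by_contra hcon
        push_neg at hcon
        exact hnotmax ⟨hv2, fun y hy => hcon y hy⟩
      obtain ⟨y, hvy, hyne⟩ := this
      have hy1 : y ≠ 1 := by
        intro hc
        rw [hc, Subgroup.zpowers_one_eq_bot, Subgroup.mem_bot] at hvy
        exact hv1 hvy
      have hyv : y ≠ v := by
        intro hc; exact hyne (by rw [hc])
      have hyy : y ≠ y⁻¹ := by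
        intro hc
        have hoy : orderOf y = 2 := by
          have hsq : y ^ 2 = 1 := by
            rw [sq]; nth_rewrite 1 [hc]; exact inv_mul_cancel y
          have hdvd := orderOf_dvd_of_pow_eq_one hsq
          rcases (Nat.dvd_prime Nat.prime_two).mp hdvd with hh | hh
          · exact absurd (orderOf_eq_one_iff.mp hh) hy1
          · exact hh
        rcases aux_mem_zpowers_two hoy hvy with hcc | hcc
        · exact hv1 hcc
        · exact hyv hcc.symm
      have hyx1 : y ≠ x1 := by
        intro hc; apply hyy; rw [hc, hx1inv]
      have hyx2 : y ≠ x2 := by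
        intro hc; apply hyy; rw [hc, hx2inv]
      have hgy : g y⁻¹ ≠ g y := hginv y hyy hyx1 hyx2
      have hvyi : v ∈ Subgroup.zpowers y⁻¹ := by
        rw [Subgroup.zpowers_inv]; exact hvy
      have hviy : v ≠ y⁻¹ := by
        intro hc; apply hyv; rw [← inv_inv y, ← hc, ← hvv]
      by_cases hgyv : g y = g v
      · exact ⟨y⁻¹, ⟨hviy, Or.inl hvyi⟩, inv_ne_one.mpr hy1, by rw [← hgyv]; exact hgy⟩
      · exact ⟨y, ⟨hyv.symm, Or.inl hvy⟩, hy1, hgyv⟩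
    · -- v has order > 2 : use v⁻¹
      refine ⟨v⁻¹, ⟨hvv, Or.inr (Subgroup.inv_mem _ (Subgroup.mem_zpowers v))⟩,
        inv_ne_one.mpr hv1, hginv v hvv hvx1 hvx2⟩
  refine ⟨ζ, ?_⟩
  -- helper constructing a rainbow path when g u = g v and v is nonspecial
  have main : ∀ u v : G, u ≠ 1 → v ≠ 1 → u ≠ v → ¬ (powerGraph G).Adj u v →
      v ≠ x1 → v ≠ x2 → g u = g v →
      ∃ p : (powerGraph G).Walk u v, p.IsPath ∧ (p.edges.map ζ).Nodup := by
    intro u v hu1 hv1 huv hnadj hvx1 hvx2 hguv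
    obtain ⟨w, hadj, hw1, hgw⟩ := hnbr v hv1 hvx1 hvx2
    have huw : u ≠ w := by
      intro hc; exact hnadj (hc ▸ hadj.symm)
    have hwv : w ≠ v := fun hc => (powerGraph G).loopless.irrefl v (hc ▸ hadj)
    refine ⟨SimpleGraph.Walk.cons (aux_adj_one hu1)
      (SimpleGraph.Walk.cons (aux_adj_one' hw1) (SimpleGraph.Walk.cons hadj.symm
        SimpleGraph.Walk.nil)), ?_, ?_⟩
    · rw [SimpleGraph.Walk.isPath_def]
      simp only [SimpleGraph.Walk.support_cons, SimpleGraph.Walk.support_nil]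
      simp [List.nodup_cons, hu1, huw, huv, hw1.symm, hv1.symm, hwv]
    · simp only [SimpleGraph.Walk.edges_cons, SimpleGraph.Walk.edges_nil,
        List.map_cons, List.map_nil]
      rw [hζv1 u hu1, hζ1v w, hζ2 w v hw1 hv1]
      simp only [List.nodup_cons, List.mem_cons, List.not_mem_nil, List.mem_singleton]
      refine ⟨?_, ?_, by simp⟩
      · intro hc
        rcases hc with hc | hc
        · rw [hguv] at hc; exact hgw hc.symm
        · rcases hc with hc | hc
          · exact hgne2 u hc
          · exact hc
      · intro hc
        rcases hc with hc | hc
        · exact hgne2 w hc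
        · exact hc
  intro u v
  by_cases huv : u = v
  · subst huv
    exact ⟨SimpleGraph.Walk.nil, SimpleGraph.Walk.IsPath.nil, by simp⟩
  by_cases hadj : (powerGraph G).Adj u v
  · refine ⟨SimpleGraph.Walk.cons hadj SimpleGraph.Walk.nil, ?_, by simp⟩
    rw [SimpleGraph.Walk.isPath_def]
    simp [huv]
  have hu1 : u ≠ 1 := by
    intro hc; subst hc
    exact hadj (aux_adj_one' (fun hc2 => huv hc2.symm))
  have hv1 : v ≠ 1 := by
    intro hc; subst hc
    exact hadj (aux_adj_one huv)
  by_cases hguv : g u = g v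
  · by_cases hvsp : v ≠ x1 ∧ v ≠ x2
    · exact main u v hu1 hv1 huv hadj hvsp.1 hvsp.2 hguv
    · -- v ∈ {x1, x2}; then u ∉ {x1, x2}, flip the roles
      have husp : u ≠ x1 ∧ u ≠ x2 := by
        push_neg at hvsp
        constructor
        · intro hc
          by_cases hv : v = x1
          · exact huv (by rw [hc, hv])
          · have hv2 : v = x2 := hvsp hv
            rw [hc, hv2, hgx1, hgx2] at hguv
            exact absurd hguv (by decide)
        · intro hc
          by_cases hv : v = x1
          · rw [hc, hv, hgx2, hgx1] at hguv
            exact absurd hguv (by decide)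
          · exact huv (by rw [hc, hvsp hv])
      obtain ⟨p, hp, hnd⟩ := main v u hv1 hu1 (Ne.symm huv)
        (fun hc => hadj hc.symm) husp.1 husp.2 hguv.symm
      refine ⟨p.reverse, hp.reverse, ?_⟩
      rw [SimpleGraph.Walk.edges_reverse, List.map_reverse]
      exact List.nodup_reverse.mpr hnd
  · -- different colors at e : use the path u - 1 - v
    refine ⟨SimpleGraph.Walk.cons (aux_adj_one hu1)
      (SimpleGraph.Walk.cons (aux_adj_one' hv1) SimpleGraph.Walk.nil), ?_, ?_⟩
    · rw [SimpleGraph.Walk.isPath_def]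
      simp only [SimpleGraph.Walk.support_cons, SimpleGraph.Walk.support_nil]
      simp [List.nodup_cons, hu1, huv, hv1.symm]
    · simp only [SimpleGraph.Walk.edges_cons, SimpleGraph.Walk.edges_nil,
        List.map_cons, List.map_nil]
      rw [hζv1 u hu1, hζ1v v]
      simp [hguv]

end Upper

theorem rc_powerGraph_eq_three_of_two_maximalInvolutions
    (G : Type*) [Group G] [Fintype G]
    (h : Nat.card {x : G // IsMaximalInvolution x} = 2) :
    rainbowConnection (powerGraph G) = 3 := by
  obtain ⟨a, b, hab, huniv⟩ := Nat.card_eq_two_iff.mp h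
  have h1 := a.2
  have h2 := b.2
  have hne : (a : G) ≠ (b : G) := fun hc => hab (Subtype.ext hc)
  have hall : ∀ y : G, IsMaximalInvolution y → y = (a : G) ∨ y = (b : G) := by
    intro y hy
    have hmem : (⟨y, hy⟩ : {x : G // IsMaximalInvolution x}) ∈
        ({a, b} : Set {x : G // IsMaximalInvolution x}) := by
      rw [huniv]; trivial
    rcases hmem with hc | hc
    · exact Or.inl (congrArg Subtype.val hc)
    · exact Or.inr (congrArg Subtype.val hc)
  obtain ⟨ζ, hζ⟩ := aux_upper h1 h2 hne hall
  unfold rainbowConnection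
  apply le_antisymm
  · exact Nat.sInf_le ⟨ζ, hζ⟩
  · refine le_csInf ⟨3, ζ, hζ⟩ ?_
    rintro k ⟨ζ', hζ'⟩
    exact aux_lower h1 h2 hne ζ' hζ'
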